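/- For real variables X_1, ..., X_p and integers 1 ≤ n ≤ m ≤ p, the sum over i from 1 to p of X_i · e_{n-1}^{ī}(X) · e_{m-1}^{ī}(X) equals the sum over k ≥ 1 of (m - n + 2k - 1) · e_{n-k}(X) · e_{m+k-1}(X). -/

import Mathlib

open Finset

/-- The `k`-th elementary symmetric polynomial of the values `X i` for `i` in `s`. -/
noncomputable def esym {p : ℕ} (X : Fin p → ℝ) (s : Finset (Fin p)) (k : ℕ) : ℝ :=
  ∑ t ∈ s.powersetCard k, ∏ i ∈ t, X i

/-- The `r`-th elementary symmetric polynomial in all variables, with the convention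
that it vanishes for `r < 0` (and automatically for `r > p`). -/
noncomputable def esymZ {p : ℕ} (X : Fin p → ℝ) (r : ℤ) : ℝ :=
  if 0 ≤ r then esym X univ r.toNat else 0

/-- The `r`-th elementary symmetric polynomial with variable `i` removed, ℤ-indexed. -/
noncomputable def esymI {p : ℕ} (X : Fin p → ℝ) (i : Fin p) (r : ℤ) : ℝ :=
  if 0 ≤ r then esym X (univ.erase i) r.toNat else 0

/-- The bilinear sums `G(a,b) = ∑ i, X i * e_a^{ī} * e_b^{ī}`. -/
noncomputable def GG {p : ℕ} (X : Fin p → ℝ) (a b : ℤ) : ℝ :=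
  ∑ i : Fin p, X i * esymI X i a * esymI X i b

lemma esym_insert_rec {p : ℕ} (X : Fin p → ℝ) (i : Fin p) (s : Finset (Fin p))
    (hi : i ∉ s) (k : ℕ) :
    esym X (insert i s) (k + 1) = esym X s (k + 1) + X i * esym X s k := by
  unfold esym
  rw [powersetCard_succ_insert hi, sum_union]
  · congr 1
    rw [sum_image]
    · rw [Finset.mul_sum]
      refine sum_congr rfl fun t ht => ?_
      rw [prod_insert]
      intro hit
      exact hi ((mem_powersetCard.mp ht).1 hit)
    · intro t ht u hu htu
      have hti : i ∉ t := fun h => hi ((mem_powersetCard.mp ht).1 h)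
      have hui : i ∉ u := fun h => hi ((mem_powersetCard.mp hu).1 h)
      rw [← erase_insert hti, htu, erase_insert hui]
  · rw [disjoint_left]
    intro t ht ht'
    obtain ⟨u, hu, rfl⟩ := mem_image.mp ht'
    exact hi ((mem_powersetCard.mp ht).1 (mem_insert_self i u))

lemma esym_erase_rec {p : ℕ} (X : Fin p → ℝ) (i : Fin p) (k : ℕ) :
    esym X univ (k + 1)
      = esym X (univ.erase i) (k + 1) + X i * esym X (univ.erase i) k := by
  have := esym_insert_rec X i (univ.erase i) (notMem_erase i univ) k
  rwa [insert_erase (mem_univ i)] at this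

lemma esymZ_rec {p : ℕ} (X : Fin p → ℝ) (i : Fin p) (r : ℤ) :
    esymZ X r = esymI X i r + X i * esymI X i (r - 1) := by
  rcases lt_trichotomy r 0 with h | h | h
  · rw [esymZ, esymI, esymI, if_neg (by omega), if_neg (by omega), if_neg (by omega)]
    ring
  · subst h
    rw [esymZ, esymI, esymI, if_pos le_rfl, if_pos le_rfl, if_neg (by omega)]
    simp [esym]
  · rw [esymZ, esymI, esymI, if_pos (by omega), if_pos (by omega), if_pos (by omega)]
    have h1 : r.toNat = (r - 1).toNat + 1 := by omega
    rw [h1]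
    exact esym_erase_rec X i _

lemma sum_esymI {p : ℕ} (X : Fin p → ℝ) (r : ℤ) :
    ∑ i : Fin p, esymI X i r = ((p : ℝ) - r) * esymZ X r := by
  rcases lt_or_ge r 0 with h | h
  · simp [esymI, esymZ, if_neg (not_le.mpr h)]
  · rw [esymZ, if_pos h]
    set k := r.toNat with hk
    have hrk : (r : ℝ) = (k : ℝ) := by
      exact_mod_cast congrArg Int.cast (Int.toNat_of_nonneg h).symm
    simp only [esymI, if_pos h, ← hk]
    rw [hrk]
    have key : ∀ i : Fin p, (univ.erase i).powersetCard k
        = (univ.powersetCard k).filter (fun t => i ∉ t) := by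
      intro i
      ext t
      simp only [mem_powersetCard, mem_filter, subset_erase, subset_univ, true_and]
      tauto
    calc ∑ i : Fin p, esym X (univ.erase i) k
        = ∑ i : Fin p, ∑ t ∈ (univ.powersetCard k).filter (fun t => i ∉ t), ∏ j ∈ t, X j := by
          simp only [esym]; exact sum_congr rfl fun i _ => by rw [key i]
      _ = ∑ i : Fin p, ∑ t ∈ univ.powersetCard k, if i ∉ t then ∏ j ∈ t, X j else 0 := by
          simp [sum_filter]
      _ = ∑ t ∈ univ.powersetCard k, ∑ i : Fin p, if i ∉ t then ∏ j ∈ t, X j else 0 :=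
          sum_comm
      _ = ∑ t ∈ univ.powersetCard k, ((p : ℝ) - k) * ∏ j ∈ t, X j := by
          refine sum_congr rfl fun t ht => ?_
          have hcard : t.card = k := (mem_powersetCard.mp ht).2
          have hkp : k ≤ p := hcard ▸ (card_le_card t.subset_univ).trans_eq (by simp)
          rw [sum_ite, sum_const_zero, add_zero, sum_const, nsmul_eq_mul]
          have : (univ.filter (fun i => i ∉ t)).card = p - k := by
            rw [← hcard]
            have : univ.filter (fun i => i ∉ t) = tᶜ := by
              ext; simp
            rw [this, card_compl, Fintype.card_fin]
          rw [this]
          congr 1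
          push_cast [Nat.cast_sub hkp]
          ring
      _ = ((p : ℝ) - k) * esym X univ k := by rw [esym, Finset.mul_sum]

lemma GG_exchange {p : ℕ} (X : Fin p → ℝ) (a b : ℤ) :
    GG X a (b - 1) - GG X (a - 1) b
      = ((b : ℝ) - a) * esymZ X a * esymZ X b := by
  have h1 : ∑ i : Fin p, esymI X i a * esymI X i b
      = esymZ X b * (((p : ℝ) - a) * esymZ X a) - GG X a (b - 1) := by
    calc ∑ i : Fin p, esymI X i a * esymI X i b
        = ∑ i : Fin p, esymI X i a * (esymZ X b - X i * esymI X i (b - 1)) := by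
          refine sum_congr rfl fun i _ => ?_
          rw [esymZ_rec X i b]; ring
      _ = (∑ i : Fin p, esymI X i a) * esymZ X b
            - ∑ i : Fin p, X i * esymI X i a * esymI X i (b - 1) := by
          rw [Finset.sum_mul, ← Finset.sum_sub_distrib]
          exact sum_congr rfl fun i _ => by ring
      _ = _ := by rw [sum_esymI, GG]; ring
  have h2 : ∑ i : Fin p, esymI X i a * esymI X i b
      = esymZ X a * (((p : ℝ) - b) * esymZ X b) - GG X (a - 1) b := by
    calc ∑ i : Fin p, esymI X i a * esymI X i b
        = ∑ i : Fin p, (esymZ X a - X i * esymI X i (a - 1)) * esymI X i b := by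
          refine sum_congr rfl fun i _ => ?_
          rw [esymZ_rec X i a]; ring
      _ = (∑ i : Fin p, esymI X i b) * esymZ X a
            - ∑ i : Fin p, X i * esymI X i (a - 1) * esymI X i b := by
          rw [Finset.sum_mul, ← Finset.sum_sub_distrib]
          exact sum_congr rfl fun i _ => by ring
      _ = _ := by rw [sum_esymI, GG]; ring
  linear_combination h1 - h2

lemma GG_neg_one {p : ℕ} (X : Fin p → ℝ) (b : ℤ) : GG X (-1) b = 0 := by
  simp [GG, esymI]

lemma GG_telescope {p : ℕ} (X : Fin p → ℝ) (n m : ℕ) (t : ℕ) :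
    GG X ((n : ℤ) - 1) ((m : ℤ) - 1)
      = (∑ j ∈ range t,
          ((m : ℝ) - n + 2 * j + 1) * esymZ X ((n : ℤ) - 1 - j) * esymZ X ((m : ℤ) + j))
        + GG X ((n : ℤ) - 1 - t) ((m : ℤ) - 1 + t) := by
  induction t with
  | zero => simp
  | succ t ih =>
    rw [ih, sum_range_succ, add_assoc]
    congr 1
    have hstar := GG_exchange X ((n : ℤ) - 1 - t) ((m : ℤ) + t)
    push_cast at hstar ⊢
    ring_nf at hstar ⊢
    linarith

theorem bracket_identity {p : ℕ} (X : Fin p → ℝ) (n m : ℕ)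
    (h1 : 1 ≤ n) (h2 : n ≤ m) (h3 : m ≤ p) :
    ∑ i : Fin p, X i * esym X (univ.erase i) (n - 1) * esym X (univ.erase i) (m - 1)
      = ∑ k ∈ Finset.Icc 1 p,
          ((m : ℝ) - n + 2 * k - 1) * esymZ X ((n : ℤ) - k) * esymZ X ((m : ℤ) + k - 1) := by
  have hL : ∑ i : Fin p, X i * esym X (univ.erase i) (n - 1) * esym X (univ.erase i) (m - 1)
      = GG X ((n : ℤ) - 1) ((m : ℤ) - 1) := by
    refine sum_congr rfl fun i _ => ?_
    have en : esymI X i ((n : ℤ) - 1) = esym X (univ.erase i) (n - 1) := by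
      rw [esymI, if_pos (by omega)]
      congr 1
      omega
    have em : esymI X i ((m : ℤ) - 1) = esym X (univ.erase i) (m - 1) := by
      rw [esymI, if_pos (by omega)]
      congr 1
      omega
    rw [en, em]
  rw [hL, GG_telescope X n m n]
  have hz : GG X ((n : ℤ) - 1 - n) ((m : ℤ) - 1 + n) = 0 := by
    have : ((n : ℤ) - 1 - n) = -1 := by ring
    rw [this, GG_neg_one]
  rw [hz, add_zero]
  -- reindex the RHS
  rw [← Finset.Ico_add_one_right_eq_Icc, Finset.sum_Ico_eq_sum_range]
  have hp : p + 1 - 1 = p := by omega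
  rw [hp]
  rw [show (∑ j ∈ range p,
        ((m : ℝ) - n + 2 * ((1 + j : ℕ) : ℝ) - 1) * esymZ X ((n : ℤ) - ((1 + j : ℕ) : ℤ)) * esymZ X ((m : ℤ) + ((1 + j : ℕ) : ℤ) - 1))
      = ∑ j ∈ range p,
        ((m : ℝ) - n + 2 * j + 1) * esymZ X ((n : ℤ) - 1 - j) * esymZ X ((m : ℤ) + j) from
    sum_congr rfl fun j _ => by
      have e1 : (n : ℤ) - (1 + j : ℕ) = (n : ℤ) - 1 - j := by push_cast; ring
      have e2 : (m : ℤ) + (1 + j : ℕ) - 1 = (m : ℤ) + j := by push_cast; ring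
      rw [e1, e2]
      congr 1
      push_cast
      ring]
  refine sum_subset (range_subset_range.mpr (h2.trans h3)) fun j _ hj => ?_
  have hjn : n ≤ j := by simpa using hj
  have : esymZ X ((n : ℤ) - 1 - j) = 0 := by
    rw [esymZ, if_neg (by omega)]
  rw [this]
  ring
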